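/- For every finite simple graph G on n ≥ 1 vertices and every pair of disjoint sets X_C, X_I ⊆ V(G) such that X_C is a clique of G and X_I is an independent set of G, there exists a sequence of at most 2⌊log₂ n⌋ + 1 triples (V_C⁰, V_I⁰, A), starting from (∅, ∅, V(G)), where each triple is a partition of V(G) into three pairwise disjoint sets satisfying X_C ⊆ V_C⁰ ∪ A and X_I ⊆ V_I⁰ ∪ A, each subsequent triple is obtained from the previous one (V_C⁰, V_I⁰, A) by choosing some v ∈ A and forming either (V_C⁰ ∪ {v}, V_I⁰ ∪ (A \ N_G[v]), A ∩ N_G(v)) or (V_C⁰ ∪ (A ∩ N_G(v)), V_I⁰ ∪ {v}, A \ N_G[v]), and the final triple (V_C⁰, V_I⁰, A) satisfies X_C ∩ A = ∅ or X_I ∩ A = ∅. -/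

import Mathlib

open Finset

private def bndBRT (a b : ℕ) : ℕ :=
  if a = 0 ∨ b = 0 then 1 else Nat.log 2 a + Nat.log 2 b + 2

private lemma log_half_BRT {x y : ℕ} (hx : x ≠ 0) (h : 2 * x ≤ y) :
    Nat.log 2 x + 1 ≤ Nat.log 2 y := by
  have h1 : Nat.log 2 (x * 2) = Nat.log 2 x + 1 := Nat.log_mul_base (by norm_num) hx
  have h2 : Nat.log 2 (x * 2) ≤ Nat.log 2 y := Nat.log_mono_right (by omega)
  omega

private lemma bnd_step1_BRT {a b a' b' : ℕ} (ha : a ≠ 0) (hb : b ≠ 0)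
    (ha' : a' ≤ a) (hb' : 2 * b' ≤ b) : bndBRT a' b' + 1 ≤ bndBRT a b := by
  unfold bndBRT
  rw [if_neg (show ¬(a = 0 ∨ b = 0) by tauto)]
  by_cases h : a' = 0 ∨ b' = 0
  · rw [if_pos h]; omega
  · rw [if_neg h]
    push_neg at h
    have h1 := Nat.log_mono_right (b := 2) ha'
    have h2 := log_half_BRT h.2 hb'
    omega

private lemma bnd_step2_BRT {a b a' b' : ℕ} (ha : a ≠ 0) (hb : b ≠ 0)
    (ha' : 2 * a' ≤ a) (hb' : b' ≤ b) : bndBRT a' b' + 1 ≤ bndBRT a b := by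
  unfold bndBRT
  rw [if_neg (show ¬(a = 0 ∨ b = 0) by tauto)]
  by_cases h : a' = 0 ∨ b' = 0
  · rw [if_pos h]; omega
  · rw [if_neg h]
    push_neg at h
    have h1 := Nat.log_mono_right (b := 2) hb'
    have h2 := log_half_BRT h.1 ha'
    omega

private lemma bnd_top_BRT {a b n : ℕ} (h : a + b ≤ n) :
    bndBRT a b ≤ 2 * Nat.log 2 n + 1 := by
  unfold bndBRT
  by_cases h0 : a = 0 ∨ b = 0
  · rw [if_pos h0]; omega
  · push_neg at h0
    rw [if_neg (by tauto)]
    rcases le_total a b with hab | hab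
    · have h1 := log_half_BRT h0.1 (show 2 * a ≤ n by omega)
      have h2 := Nat.log_mono_right (b := 2) (show b ≤ n by omega)
      omega
    · have h1 := log_half_BRT h0.2 (show 2 * b ≤ n by omega)
      have h2 := Nat.log_mono_right (b := 2) (show a ≤ n by omega)
      omega

private lemma branch_aux_BRT {V : Type*} [Fintype V] [DecidableEq V]
    (G : SimpleGraph V) [DecidableRel G.Adj]
    (X_C X_I : Finset V) (hXdisj : Disjoint X_C X_I)
    (hclique : G.IsClique (X_C : Set V))
    (hindep : (X_I : Set V).Pairwise (fun u w => ¬ G.Adj u w)) :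
    ∀ k (C I A : Finset V),
      (X_C ∩ A).card + (X_I ∩ A).card ≤ k →
      Disjoint C I → Disjoint C A → Disjoint I A → C ∪ I ∪ A = Finset.univ →
      X_C ⊆ C ∪ A → X_I ⊆ I ∪ A →
      ∃ L : List (Finset V × Finset V × Finset V),
        L.head? = some (C, I, A) ∧
        (∀ t ∈ L, (Disjoint t.1 t.2.1 ∧ Disjoint t.1 t.2.2 ∧ Disjoint t.2.1 t.2.2 ∧
          t.1 ∪ t.2.1 ∪ t.2.2 = Finset.univ) ∧
          X_C ⊆ t.1 ∪ t.2.2 ∧ X_I ⊆ t.2.1 ∪ t.2.2) ∧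
        L.Chain' (fun t t' => ∃ v ∈ t.2.2,
          t' = (insert v t.1, t.2.1 ∪ (t.2.2 \ insert v (G.neighborFinset v)),
                t.2.2 ∩ G.neighborFinset v) ∨
          t' = (t.1 ∪ (t.2.2 ∩ G.neighborFinset v), insert v t.2.1,
                t.2.2 \ insert v (G.neighborFinset v))) ∧
        (∀ t, L.getLast? = some t → X_C ∩ t.2.2 = ∅ ∨ X_I ∩ t.2.2 = ∅) ∧
        L.length ≤ bndBRT (X_C ∩ A).card (X_I ∩ A).card := by
  intro k
  induction k with
  | zero =>
    intro C I A hk hCI hCA hIA huniv hXC hXI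
    refine ⟨[(C, I, A)], rfl, ?_, List.isChain_singleton _, ?_, ?_⟩
    · rintro t ht
      simp only [List.mem_singleton] at ht
      subst ht
      exact ⟨⟨hCI, hCA, hIA, huniv⟩, hXC, hXI⟩
    · rintro t ht
      simp only [List.getLast?_singleton, Option.some.injEq] at ht
      subst ht
      have h0 : (X_C ∩ A).card = 0 := by omega
      exact Or.inl (Finset.card_eq_zero.mp h0)
    · simp [bndBRT]
      split <;> omega
  | succ k IH =>
    intro C I A hk hCI hCA hIA huniv hXC hXI
    by_cases hterm : X_C ∩ A = ∅ ∨ X_I ∩ A = ∅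
    · refine ⟨[(C, I, A)], rfl, ?_, List.isChain_singleton _, ?_, ?_⟩
      · rintro t ht
        simp only [List.mem_singleton] at ht
        subst ht
        exact ⟨⟨hCI, hCA, hIA, huniv⟩, hXC, hXI⟩
      · rintro t ht
        simp only [List.getLast?_singleton, Option.some.injEq] at ht
        subst ht
        exact hterm
      · simp only [List.length_singleton, bndBRT]
        rw [if_pos (by rcases hterm with h | h <;> simp [h, Finset.card_eq_zero] <;> tauto)]
    · push_neg at hterm
      obtain ⟨hCne, hIne⟩ := hterm
      have haT : (X_C ∩ A).card ≠ 0 := fun h => Finset.nonempty_iff_ne_empty.mp hCne (Finset.card_eq_zero.mp h)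
      have hbT : (X_I ∩ A).card ≠ 0 := fun h => Finset.nonempty_iff_ne_empty.mp hIne (Finset.card_eq_zero.mp h)
      by_cases hex : ∃ v ∈ X_C ∩ A,
          2 * ((X_I ∩ A) ∩ G.neighborFinset v).card ≤ (X_I ∩ A).card
      · -- branch type 1
        obtain ⟨v, hv, hdeg⟩ := hex
        have hvC : v ∈ X_C := (Finset.mem_inter.mp hv).1
        have hvA : v ∈ A := (Finset.mem_inter.mp hv).2
        have hvnI : v ∉ X_I := fun h => (Finset.disjoint_left.mp hXdisj hvC) h
        set Nv := G.neighborFinset v with hNv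
        set C' := insert v C with hC'
        set I' := I ∪ (A \ insert v Nv) with hI'
        set A' := A ∩ Nv with hA'
        have hvnNv : v ∉ Nv := by simp [hNv]
        -- key identities
        have hXCA' : X_C ∩ A' = (X_C ∩ A).erase v := by
          ext x
          simp only [hA', Finset.mem_inter, Finset.mem_erase, hNv,
            SimpleGraph.mem_neighborFinset]
          constructor
          · rintro ⟨hx1, hx2, hx3⟩
            exact ⟨fun h => (h ▸ hx3).ne rfl, hx1, hx2⟩
          · rintro ⟨hne, hx1, hx2⟩
            exact ⟨hx1, hx2, hclique hvC hx1 (fun h => hne h.symm)⟩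
        have hXIA' : X_I ∩ A' = (X_I ∩ A) ∩ Nv := by
          rw [hA', Finset.inter_assoc]
        have ha' : (X_C ∩ A').card ≤ (X_C ∩ A).card := by
          rw [hXCA']; exact Finset.card_erase_le
        have hb' : 2 * (X_I ∩ A').card ≤ (X_I ∩ A).card := by
          rw [hXIA']; exact hdeg
        have hmeas : (X_C ∩ A').card + (X_I ∩ A').card ≤ k := by
          have h1 : (X_C ∩ A').card = (X_C ∩ A).card - 1 := by
            rw [hXCA', Finset.card_erase_of_mem hv]
          omega
        have hCI' : Disjoint C' I' := by
          rw [Finset.disjoint_left, hC', hI']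
          intro x hx hx'
          rcases Finset.mem_insert.mp hx with rfl | hx
          · rcases Finset.mem_union.mp hx' with h | h
            · exact Finset.disjoint_left.mp hIA h hvA
            · exact (Finset.mem_sdiff.mp h).2 (Finset.mem_insert_self _ _)
          · rcases Finset.mem_union.mp hx' with h | h
            · exact Finset.disjoint_left.mp hCI hx h
            · exact Finset.disjoint_left.mp hCA hx (Finset.mem_sdiff.mp h).1
        have hCA' : Disjoint C' A' := by
          simp only [hC', Finset.disjoint_left]
          intro x hx
          rcases Finset.mem_insert.mp hx with rfl | hx
          · exact fun h => hvnNv (Finset.mem_inter.mp h).2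
          · exact fun h => Finset.disjoint_left.mp hCA hx (Finset.mem_inter.mp h).1
        have hIA' : Disjoint I' A' := by
          rw [Finset.disjoint_left, hI', hA']
          intro x hx hx'
          rcases Finset.mem_union.mp hx with h | h
          · exact Finset.disjoint_left.mp hIA h (Finset.mem_inter.mp hx').1
          · exact (Finset.mem_sdiff.mp h).2
              (Finset.mem_insert_of_mem (Finset.mem_inter.mp hx').2)
        have huniv' : C' ∪ I' ∪ A' = Finset.univ := by
          apply Finset.eq_univ_of_forall
          intro x
          have hx := Finset.eq_univ_iff_forall.mp huniv x
          simp only [Finset.mem_union] at hx ⊢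
          rcases hx with (hx | hx) | hx
          · exact Or.inl (Or.inl (Finset.mem_insert_of_mem hx))
          · exact Or.inl (Or.inr (Finset.mem_union_left _ hx))
          · by_cases hxv : x ∈ insert v Nv
            · rcases Finset.mem_insert.mp hxv with rfl | hxn
              · exact Or.inl (Or.inl (Finset.mem_insert_self _ _))
              · exact Or.inr (Finset.mem_inter.mpr ⟨hx, hxn⟩)
            · exact Or.inl (Or.inr (Finset.mem_union_right _
                (Finset.mem_sdiff.mpr ⟨hx, hxv⟩)))
        have hXC' : X_C ⊆ C' ∪ A' := by
          intro x hx
          rcases Finset.mem_union.mp (hXC hx) with hxC | hxA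
          · exact Finset.mem_union_left _ (Finset.mem_insert_of_mem hxC)
          · by_cases hxv : x = v
            · exact Finset.mem_union_left _ (hxv ▸ Finset.mem_insert_self _ _)
            · refine Finset.mem_union_right _ (Finset.mem_inter.mpr ⟨hxA, ?_⟩)
              rw [hNv, SimpleGraph.mem_neighborFinset]
              exact hclique hvC hx (fun h => hxv h.symm)
        have hXI' : X_I ⊆ I' ∪ A' := by
          intro x hx
          rcases Finset.mem_union.mp (hXI hx) with hxI | hxA
          · exact Finset.mem_union_left _ (Finset.mem_union_left _ hxI)
          · by_cases hxn : x ∈ Nv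
            · exact Finset.mem_union_right _ (Finset.mem_inter.mpr ⟨hxA, hxn⟩)
            · refine Finset.mem_union_left _ (Finset.mem_union_right _ ?_)
              refine Finset.mem_sdiff.mpr ⟨hxA, ?_⟩
              intro h
              rcases Finset.mem_insert.mp h with rfl | h
              · exact hvnI hx
              · exact hxn h
        obtain ⟨L', hhead', hprops', hchain', hlast', hlen'⟩ :=
          IH C' I' A' hmeas hCI' hCA' hIA' huniv' hXC' hXI'
        refine ⟨(C, I, A) :: L', rfl, ?_, ?_, ?_, ?_⟩
        · rintro t ht
          rcases List.mem_cons.mp ht with rfl | ht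
          · exact ⟨⟨hCI, hCA, hIA, huniv⟩, hXC, hXI⟩
          · exact hprops' t ht
        · rw [List.Chain', List.isChain_cons]
          refine ⟨?_, hchain'⟩
          intro y hy
          rw [hhead'] at hy
          simp only [Option.mem_def, Option.some.injEq] at hy
          subst hy
          exact ⟨v, hvA, Or.inl rfl⟩
        · intro t ht
          obtain ⟨x, xs, rfl⟩ : ∃ x xs, L' = x :: xs := by
            cases L' with
            | nil => simp at hhead'
            | cons x xs => exact ⟨x, xs, rfl⟩
          rw [List.getLast?_cons_cons] at ht
          exact hlast' t ht
        · simp only [List.length_cons]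
          calc L'.length + 1 ≤ bndBRT (X_C ∩ A').card (X_I ∩ A').card + 1 := by omega
            _ ≤ bndBRT (X_C ∩ A).card (X_I ∩ A).card :=
              bnd_step1_BRT haT hbT ha' hb'
      · -- branch type 2 via double counting
        push_neg at hex
        -- double counting sum identity
        have hkey : ∑ v ∈ X_C ∩ A, ((X_I ∩ A) ∩ G.neighborFinset v).card =
            ∑ u ∈ X_I ∩ A, ((X_C ∩ A) ∩ G.neighborFinset u).card := by
          have hfil : ∀ (T : Finset V) (v : V),
              (T ∩ G.neighborFinset v) = T.filter (fun u => G.Adj v u) := by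
            intro T v
            ext u
            simp [SimpleGraph.mem_neighborFinset]
          simp only [hfil, Finset.card_filter]
          rw [Finset.sum_comm]
          apply Finset.sum_congr rfl
          intro u _
          apply Finset.sum_congr rfl
          intro v _
          simp [G.adj_comm]
        have hexist : ∃ u ∈ X_I ∩ A,
            (X_C ∩ A).card < 2 * ((X_C ∩ A) ∩ G.neighborFinset u).card := by
          by_contra hcon
          push_neg at hcon
          have hlt : ∑ v ∈ X_C ∩ A, (X_I ∩ A).card <
              ∑ v ∈ X_C ∩ A, 2 * ((X_I ∩ A) ∩ G.neighborFinset v).card := by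
            apply Finset.sum_lt_sum_of_nonempty hCne
            intro v hv
            exact hex v hv
          have hle : ∑ u ∈ X_I ∩ A, 2 * ((X_C ∩ A) ∩ G.neighborFinset u).card ≤
              ∑ u ∈ X_I ∩ A, (X_C ∩ A).card := Finset.sum_le_sum hcon
          rw [Finset.sum_const, smul_eq_mul] at hlt hle
          rw [← Finset.mul_sum] at hlt hle
          rw [hkey] at hlt
          nlinarith [Nat.zero_le ((X_I ∩ A).card)]
        obtain ⟨u, hu, hdeg⟩ := hexist
        have huI : u ∈ X_I := (Finset.mem_inter.mp hu).1
        have huA : u ∈ A := (Finset.mem_inter.mp hu).2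
        have hunC : u ∉ X_C := fun h => (Finset.disjoint_left.mp hXdisj h) huI
        set Nu := G.neighborFinset u with hNu
        set C' := C ∪ (A ∩ Nu) with hC'
        set I' := insert u I with hI'
        set A' := A \ insert u Nu with hA'
        have hunNu : u ∉ Nu := by simp [hNu]
        have hXIA' : X_I ∩ A' = (X_I ∩ A).erase u := by
          ext x
          simp only [hA', Finset.mem_inter, Finset.mem_sdiff, Finset.mem_erase,
            Finset.mem_insert, hNu, SimpleGraph.mem_neighborFinset]
          constructor
          · rintro ⟨hx1, hx2, hx3⟩
            exact ⟨fun h => hx3 (Or.inl h), hx1, hx2⟩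
          · rintro ⟨hne, hx1, hx2⟩
            refine ⟨hx1, hx2, ?_⟩
            rintro (rfl | hadj)
            · exact hne rfl
            · exact hindep huI hx1 (fun h => hne h.symm) hadj
        have hXCA'card : 2 * (X_C ∩ A').card ≤ (X_C ∩ A).card := by
          have hsub : (X_C ∩ A) ∩ insert u Nu ⊇ (X_C ∩ A) ∩ Nu :=
            Finset.inter_subset_inter_left (Finset.subset_insert u Nu)
          have h1 : ((X_C ∩ A) ∩ Nu).card ≤ ((X_C ∩ A) ∩ insert u Nu).card :=
            Finset.card_le_card hsub
          have h2 : ((X_C ∩ A) \ insert u Nu).card + ((X_C ∩ A) ∩ insert u Nu).card =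
              (X_C ∩ A).card := Finset.card_sdiff_add_card_inter _ _
          have h3 : X_C ∩ A' = (X_C ∩ A) \ insert u Nu := by
            rw [hA']
            ext x
            simp only [Finset.mem_inter, Finset.mem_sdiff]
            tauto
          rw [h3]
          omega
        have hmeas : (X_C ∩ A').card + (X_I ∩ A').card ≤ k := by
          have h1 : (X_I ∩ A').card = (X_I ∩ A).card - 1 := by
            rw [hXIA', Finset.card_erase_of_mem hu]
          omega
        have hCI' : Disjoint C' I' := by
          rw [Finset.disjoint_left, hC', hI']
          intro x hx hx'
          rcases Finset.mem_union.mp hx with h | h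
          · rcases Finset.mem_insert.mp hx' with rfl | h'
            · exact Finset.disjoint_left.mp hCA h huA
            · exact Finset.disjoint_left.mp hCI h h'
          · obtain ⟨hxA, hxN⟩ := Finset.mem_inter.mp h
            rcases Finset.mem_insert.mp hx' with rfl | h'
            · exact hunNu hxN
            · exact Finset.disjoint_left.mp hIA h' hxA
        have hCA' : Disjoint C' A' := by
          rw [Finset.disjoint_left, hC', hA']
          intro x hx hx'
          rcases Finset.mem_union.mp hx with h | h
          · exact Finset.disjoint_left.mp hCA h (Finset.mem_sdiff.mp hx').1
          · exact (Finset.mem_sdiff.mp hx').2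
              (Finset.mem_insert_of_mem (Finset.mem_inter.mp h).2)
        have hIA' : Disjoint I' A' := by
          simp only [hI', Finset.disjoint_left]
          intro x hx h
          rcases Finset.mem_insert.mp hx with rfl | hx
          · exact (Finset.mem_sdiff.mp h).2 (Finset.mem_insert_self _ _)
          · exact Finset.disjoint_left.mp hIA hx (Finset.mem_sdiff.mp h).1
        have huniv' : C' ∪ I' ∪ A' = Finset.univ := by
          apply Finset.eq_univ_of_forall
          intro x
          have hx := Finset.eq_univ_iff_forall.mp huniv x
          simp only [Finset.mem_union] at hx ⊢
          rcases hx with (hx | hx) | hx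
          · exact Or.inl (Or.inl (Finset.mem_union_left _ hx))
          · exact Or.inl (Or.inr (Finset.mem_insert_of_mem hx))
          · by_cases hxu : x ∈ insert u Nu
            · rcases Finset.mem_insert.mp hxu with rfl | hxn
              · exact Or.inl (Or.inr (Finset.mem_insert_self _ _))
              · exact Or.inl (Or.inl (Finset.mem_union_right _
                  (Finset.mem_inter.mpr ⟨hx, hxn⟩)))
            · exact Or.inr (Finset.mem_sdiff.mpr ⟨hx, hxu⟩)
        have hXC' : X_C ⊆ C' ∪ A' := by
          intro x hx
          rcases Finset.mem_union.mp (hXC hx) with hxC | hxA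
          · exact Finset.mem_union_left _ (Finset.mem_union_left _ hxC)
          · by_cases hxn : x ∈ Nu
            · exact Finset.mem_union_left _ (Finset.mem_union_right _
                (Finset.mem_inter.mpr ⟨hxA, hxn⟩))
            · refine Finset.mem_union_right _ (Finset.mem_sdiff.mpr ⟨hxA, ?_⟩)
              intro h
              rcases Finset.mem_insert.mp h with rfl | h
              · exact hunC hx
              · exact hxn h
        have hXI' : X_I ⊆ I' ∪ A' := by
          intro x hx
          rcases Finset.mem_union.mp (hXI hx) with hxI | hxA
          · exact Finset.mem_union_left _ (Finset.mem_insert_of_mem hxI)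
          · by_cases hxu : x = u
            · exact Finset.mem_union_left _ (hxu ▸ Finset.mem_insert_self _ _)
            · refine Finset.mem_union_right _ (Finset.mem_sdiff.mpr ⟨hxA, ?_⟩)
              intro h
              rcases Finset.mem_insert.mp h with rfl | h
              · exact hxu rfl
              · exact hindep huI hx (fun h' => hxu h'.symm)
                  ((G.mem_neighborFinset u x).mp h)
        obtain ⟨L', hhead', hprops', hchain', hlast', hlen'⟩ :=
          IH C' I' A' hmeas hCI' hCA' hIA' huniv' hXC' hXI'
        refine ⟨(C, I, A) :: L', rfl, ?_, ?_, ?_, ?_⟩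
        · rintro t ht
          rcases List.mem_cons.mp ht with rfl | ht
          · exact ⟨⟨hCI, hCA, hIA, huniv⟩, hXC, hXI⟩
          · exact hprops' t ht
        · rw [List.Chain', List.isChain_cons]
          refine ⟨?_, hchain'⟩
          intro y hy
          rw [hhead'] at hy
          simp only [Option.mem_def, Option.some.injEq] at hy
          subst hy
          exact ⟨u, huA, Or.inr rfl⟩
        · intro t ht
          obtain ⟨x, xs, rfl⟩ : ∃ x xs, L' = x :: xs := by
            cases L' with
            | nil => simp at hhead'
            | cons x xs => exact ⟨x, xs, rfl⟩
          rw [List.getLast?_cons_cons] at ht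
          exact hlast' t ht
        · simp only [List.length_cons]
          have hb'le : (X_I ∩ A').card ≤ (X_I ∩ A).card := by
            rw [hXIA']; exact Finset.card_erase_le
          calc L'.length + 1 ≤ bndBRT (X_C ∩ A').card (X_I ∩ A').card + 1 := by omega
            _ ≤ bndBRT (X_C ∩ A).card (X_I ∩ A).card :=
              bnd_step2_BRT haT hbT hXCA'card hb'le

/-- For every graph on `n ≥ 1` vertices and disjoint clique `X_C` and independent set `X_I`,
there is a sequence of at most `2⌊log₂ n⌋ + 1` states, starting at `(∅, ∅, V(G))`, in which
each state is a promising tripartition of `V(G)`, each state follows from the previous one by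
a branching step on some active vertex, and the final state has `X_C ∩ A = ∅` or
`X_I ∩ A = ∅`. -/
theorem branching_reaches_terminal_state {V : Type*} [Fintype V] [DecidableEq V]
    (G : SimpleGraph V) [DecidableRel G.Adj] (n : ℕ) (hn : n = Fintype.card V) (hn1 : 1 ≤ n)
    (X_C X_I : Finset V) (hXdisj : Disjoint X_C X_I)
    (hclique : G.IsClique (X_C : Set V))
    (hindep : (X_I : Set V).Pairwise (fun u w => ¬ G.Adj u w)) :
    ∃ L : List (Finset V × Finset V × Finset V),
      L.length ≤ 2 * Nat.log 2 n + 1 ∧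
      L.head? = some (∅, ∅, Finset.univ) ∧
      (∀ t ∈ L, (Disjoint t.1 t.2.1 ∧ Disjoint t.1 t.2.2 ∧ Disjoint t.2.1 t.2.2 ∧
        t.1 ∪ t.2.1 ∪ t.2.2 = Finset.univ) ∧
        X_C ⊆ t.1 ∪ t.2.2 ∧ X_I ⊆ t.2.1 ∪ t.2.2) ∧
      L.Chain' (fun t t' => ∃ v ∈ t.2.2,
        t' = (insert v t.1, t.2.1 ∪ (t.2.2 \ insert v (G.neighborFinset v)),
              t.2.2 ∩ G.neighborFinset v) ∨
        t' = (t.1 ∪ (t.2.2 ∩ G.neighborFinset v), insert v t.2.1,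
              t.2.2 \ insert v (G.neighborFinset v))) ∧
      (∀ t, L.getLast? = some t → X_C ∩ t.2.2 = ∅ ∨ X_I ∩ t.2.2 = ∅) := by
  obtain ⟨L, hhead, hprops, hchain, hlast, hlen⟩ :=
    branch_aux_BRT G X_C X_I hXdisj hclique hindep
      ((X_C ∩ Finset.univ).card + (X_I ∩ Finset.univ).card) ∅ ∅ Finset.univ
      le_rfl (Finset.disjoint_empty_left _) (Finset.disjoint_empty_left _)
      (Finset.disjoint_empty_left _) (by simp) (by simp) (by simp)
  refine ⟨L, ?_, hhead, hprops, hchain, hlast⟩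
  have hcard : X_C.card + X_I.card ≤ n := by
    rw [hn]
    calc X_C.card + X_I.card = (X_C ∪ X_I).card :=
          (Finset.card_union_of_disjoint hXdisj).symm
      _ ≤ Fintype.card V := Finset.card_le_univ _
  have hbnd := bnd_top_BRT hcard
  simp only [Finset.inter_univ] at hlen
  omega
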